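/- Let λ > 0, μ ∈ ℝ, u ∈ ℓ²(ℤ, ℂ), and let ξ_l be a cut-off sequence with values in [0,1] satisfying ‖D⁺ξ_l‖_∞ ≤ c₂/l. Then Re[(λ + iμ)(D⁺u, D⁺(ξ_l u))] ≤ 4λ Σ_{j∈ℤ} ξ_{l,j} |u_j|² + (4λ + 2|μ|)(c₂/l) ‖u‖², where (ξ_l u)_j = ξ_{l,j} u_j and the inner product is the ℓ² complex inner product. -/

import Mathlib

private lemma aux_real (lam M ε a b d X Y : ℝ) (hlam : 0 < lam) (hM : lam ≤ M)
    (hε : 0 ≤ ε) (ha : 0 ≤ a) (hb : 0 ≤ b) (hba : b ≤ a + ε)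
    (hd0 : 0 ≤ d) (hd : d ≤ X + Y) (hX : 0 ≤ X) (hY : 0 ≤ Y) :
    lam * (b * d ^ 2) + M * ε * (d * X) ≤
      2 * lam * (a * X ^ 2) + 2 * lam * (b * Y ^ 2)
        + (2 * lam * ε + M * ε * (3 / 2)) * X ^ 2 + (M * ε * (1 / 2)) * Y ^ 2 := by
  have hMε : 0 ≤ M * ε := mul_nonneg (le_trans hlam.le hM) hε
  have h1 : d ^ 2 ≤ (X + Y) ^ 2 := by nlinarith
  have h2 : b * d ^ 2 ≤ b * (X + Y) ^ 2 := mul_le_mul_of_nonneg_left h1 hb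
  have h3 : b * (X + Y) ^ 2 ≤ 2 * (a + ε) * X ^ 2 + 2 * b * Y ^ 2 := by
    nlinarith [mul_nonneg hb (sq_nonneg (X - Y)),
      mul_nonneg (by linarith : (0:ℝ) ≤ a + ε - b) (sq_nonneg X)]
  have h4 : d * X ≤ (3 / 2) * X ^ 2 + (1 / 2) * Y ^ 2 := by
    nlinarith [mul_nonneg (by linarith : (0:ℝ) ≤ X + Y - d) hX, sq_nonneg (X - Y)]
  have h5 := mul_le_mul_of_nonneg_left (h2.trans h3) hlam.le
  have h6 := mul_le_mul_of_nonneg_left h4 hMε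
  nlinarith [h5, h6]

private lemma aux_pt (lam μ ε a b : ℝ) (hlam : 0 < lam) (hε : 0 ≤ ε)
    (ha0 : 0 ≤ a) (hb0 : 0 ≤ b) (hab : |a - b| ≤ ε) (x y : ℂ) :
    (((lam : ℂ) + μ * Complex.I) *
        ((x - y) * (starRingEnd ℂ) ((a : ℂ) * x - (b : ℂ) * y))).re ≤
      2 * lam * (a * ‖x‖ ^ 2) + 2 * lam * (b * ‖y‖ ^ 2)
        + (2 * lam * ε + (lam + |μ|) * ε * (3 / 2)) * ‖x‖ ^ 2
        + ((lam + |μ|) * ε * (1 / 2)) * ‖y‖ ^ 2 := by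
  set z : ℂ := (lam : ℂ) + μ * Complex.I with hzdef
  have hznorm : ‖z‖ ≤ lam + |μ| := by
    calc ‖z‖ ≤ ‖(lam : ℂ)‖ + ‖(μ : ℂ) * Complex.I‖ := norm_add_le _ _
    _ = |lam| + |μ| := by simp
    _ = lam + |μ| := by rw [abs_of_pos hlam]
  have hsplit : (x - y) * (starRingEnd ℂ) ((a : ℂ) * x - (b : ℂ) * y)
      = (b : ℂ) * ((x - y) * (starRingEnd ℂ) (x - y))
        + ((a - b : ℝ) : ℂ) * ((x - y) * (starRingEnd ℂ) x) := by
    simp only [map_sub, map_mul, Complex.conj_ofReal]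
    push_cast
    ring
  rw [hsplit, mul_add, Complex.add_re]
  have h1 : (z * ((b : ℂ) * ((x - y) * (starRingEnd ℂ) (x - y)))).re
      = lam * (b * ‖x - y‖ ^ 2) := by
    rw [Complex.mul_conj']
    simp [hzdef, Complex.mul_re, Complex.mul_im, ← Complex.ofReal_pow]
  have h2 : (z * (((a - b : ℝ) : ℂ) * ((x - y) * (starRingEnd ℂ) x))).re
      ≤ (lam + |μ|) * ε * (‖x - y‖ * ‖x‖) := by
    have hnn : 0 ≤ ‖x - y‖ * ‖x‖ := mul_nonneg (norm_nonneg _) (norm_nonneg _)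
    calc (z * (((a - b : ℝ) : ℂ) * ((x - y) * (starRingEnd ℂ) x))).re
        ≤ ‖z * (((a - b : ℝ) : ℂ) * ((x - y) * (starRingEnd ℂ) x))‖ :=
          Complex.re_le_norm _
    _ = ‖z‖ * (|a - b| * (‖x - y‖ * ‖x‖)) := by
          rw [norm_mul, norm_mul, norm_mul, Complex.norm_real, RCLike.norm_conj, Real.norm_eq_abs]
    _ ≤ (lam + |μ|) * (ε * (‖x - y‖ * ‖x‖)) := by
          gcongr
    _ = (lam + |μ|) * ε * (‖x - y‖ * ‖x‖) := by ring
  rw [h1]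
  have hfin := aux_real lam (lam + |μ|) ε a b ‖x - y‖ ‖x‖ ‖y‖ hlam
    (by simp [le_add_iff_nonneg_right, abs_nonneg]) hε ha0 hb0
    (by have h := (abs_le.mp hab).1; linarith) (norm_nonneg _) (norm_sub_le _ _)
    (norm_nonneg _) (norm_nonneg _)
  linarith [h2, hfin]


private lemma aux_sq (X Y : ℝ) : (X + Y) * (X + Y) ≤ 2 * (X ^ 2 + Y ^ 2) := by
  nlinarith [sq_nonneg (X - Y)]

set_option maxHeartbeats 1000000

/-- Cut-off weighted gradient estimate: for `λ > 0`, `μ ∈ ℝ`, `u ∈ ℓ²(ℤ, ℂ)` and a cut-off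
sequence `ξ_l` with values in `[0,1]` and `‖D⁺ξ_l‖_∞ ≤ c₂/l`,
`Re[(λ + iμ)(D⁺u, D⁺(ξ_l u))] ≤ 4λ Σ_j ξ_{l,j} |u_j|² + (4λ + 2|μ|)(c₂/l) ‖u‖²`,
where `(x, y) = Σ_j x_j conj(y_j)` is the `ℓ²` inner product. -/
theorem stmt14 (lam μ c₂ : ℝ) (hlam : 0 < lam) (l : ℕ) (hl : 0 < l)
    (ξ : ℤ → ℝ) (hrange : ∀ j : ℤ, ξ j ∈ Set.Icc (0 : ℝ) 1)
    (hdiff : ∀ j : ℤ, |ξ (j + 1) - ξ j| ≤ c₂ / (l : ℝ))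
    (u : lp (fun _ : ℤ => ℂ) 2) :
    (((lam : ℂ) + μ * Complex.I) *
        ∑' j : ℤ, (u (j + 1) - u j) *
          (starRingEnd ℂ) ((ξ (j + 1) : ℂ) * u (j + 1) - (ξ j : ℂ) * u j)).re ≤
      4 * lam * ∑' j : ℤ, ξ j * ‖u j‖ ^ 2
      + (4 * lam + 2 * |μ|) * (c₂ / (l : ℝ)) * ‖u‖ ^ 2 := by
  have hε0 : 0 ≤ c₂ / (l : ℝ) := le_trans (abs_nonneg _) (hdiff 0)
  have hxi0 : ∀ j, 0 ≤ ξ j := fun j => (hrange j).1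
  have hxi1 : ∀ j, ξ j ≤ 1 := fun j => (hrange j).2
  -- summability of |u|²
  have hnu_sum : Summable (fun j : ℤ => ‖u j‖ ^ 2) := by
    have h := (lp.memℓp u).summable (p := 2) (by norm_num)
    simpa [Real.rpow_natCast] using h
  have hnu_sum' : Summable (fun j : ℤ => ‖u (j + 1)‖ ^ 2) := by
    have h := ((Equiv.addRight (1 : ℤ)).summable_iff
      (f := fun j : ℤ => ‖u j‖ ^ 2)).mpr hnu_sum
    simpa [Function.comp_def, Equiv.coe_addRight] using h
  have hnorm : ‖u‖ ^ 2 = ∑' j : ℤ, ‖u j‖ ^ 2 := by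
    have h := lp.norm_rpow_eq_tsum (p := 2) (by norm_num) u
    simpa [Real.rpow_natCast] using h
  have hg_sum : Summable (fun j : ℤ => ξ j * ‖u j‖ ^ 2) := by
    refine Summable.of_nonneg_of_le (fun j => mul_nonneg (hxi0 j) (sq_nonneg _))
      (fun j => ?_) hnu_sum
    calc ξ j * ‖u j‖ ^ 2 ≤ 1 * ‖u j‖ ^ 2 :=
        mul_le_mul_of_nonneg_right (hxi1 j) (sq_nonneg _)
    _ = ‖u j‖ ^ 2 := one_mul _
  have hg_sum' : Summable (fun j : ℤ => ξ (j + 1) * ‖u (j + 1)‖ ^ 2) := by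
    have h := ((Equiv.addRight (1 : ℤ)).summable_iff
      (f := fun j : ℤ => ξ j * ‖u j‖ ^ 2)).mpr hg_sum
    simpa [Function.comp_def, Equiv.coe_addRight] using h
  -- summability of the complex series
  have hT_sum : Summable (fun j : ℤ => (u (j + 1) - u j) *
      (starRingEnd ℂ) ((ξ (j + 1) : ℂ) * u (j + 1) - (ξ j : ℂ) * u j)) := by
    refine Summable.of_norm_bounded ((hnu_sum'.add hnu_sum).mul_left 2) (fun j => ?_)
    have h1 : ‖u (j + 1) - u j‖ ≤ ‖u (j + 1)‖ + ‖u j‖ := norm_sub_le _ _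
    have h2 : ‖(ξ (j + 1) : ℂ) * u (j + 1) - (ξ j : ℂ) * u j‖ ≤ ‖u (j + 1)‖ + ‖u j‖ := by
      calc ‖(ξ (j + 1) : ℂ) * u (j + 1) - (ξ j : ℂ) * u j‖
          ≤ ‖(ξ (j + 1) : ℂ) * u (j + 1)‖ + ‖(ξ j : ℂ) * u j‖ := norm_sub_le _ _
      _ = |ξ (j + 1)| * ‖u (j + 1)‖ + |ξ j| * ‖u j‖ := by
          simp [norm_mul, Complex.norm_real]
      _ ≤ 1 * ‖u (j + 1)‖ + 1 * ‖u j‖ := by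
          gcongr
          · rw [abs_of_nonneg (hxi0 _)]; exact hxi1 _
          · rw [abs_of_nonneg (hxi0 _)]; exact hxi1 _
      _ = ‖u (j + 1)‖ + ‖u j‖ := by ring
    calc ‖(u (j + 1) - u j) *
          (starRingEnd ℂ) ((ξ (j + 1) : ℂ) * u (j + 1) - (ξ j : ℂ) * u j)‖
        = ‖u (j + 1) - u j‖ * ‖(ξ (j + 1) : ℂ) * u (j + 1) - (ξ j : ℂ) * u j‖ := by
          rw [norm_mul, RCLike.norm_conj]
    _ ≤ (‖u (j + 1)‖ + ‖u j‖) * (‖u (j + 1)‖ + ‖u j‖) :=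
        mul_le_mul h1 h2 (norm_nonneg _) (by positivity)
    _ ≤ 2 * (‖u (j + 1)‖ ^ 2 + ‖u j‖ ^ 2) := aux_sq _ _
  have hzT_sum : Summable (fun j : ℤ => ((lam : ℂ) + μ * Complex.I) *
      ((u (j + 1) - u j) *
        (starRingEnd ℂ) ((ξ (j + 1) : ℂ) * u (j + 1) - (ξ j : ℂ) * u j))) :=
    hT_sum.mul_left _
  have hre_sum : Summable (fun j : ℤ => (((lam : ℂ) + μ * Complex.I) *
      ((u (j + 1) - u j) *
        (starRingEnd ℂ) ((ξ (j + 1) : ℂ) * u (j + 1) - (ξ j : ℂ) * u j))).re) := by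
    simpa using Complex.reCLM.summable hzT_sum
  -- move re inside the sum
  have hmove : (((lam : ℂ) + μ * Complex.I) *
      ∑' j : ℤ, (u (j + 1) - u j) *
        (starRingEnd ℂ) ((ξ (j + 1) : ℂ) * u (j + 1) - (ξ j : ℂ) * u j)).re
      = ∑' j : ℤ, (((lam : ℂ) + μ * Complex.I) *
        ((u (j + 1) - u j) *
          (starRingEnd ℂ) ((ξ (j + 1) : ℂ) * u (j + 1) - (ξ j : ℂ) * u j))).re := by
    rw [← tsum_mul_left, Complex.re_tsum hzT_sum]
  -- the dominating sequence
  have hc_sum : Summable (fun j : ℤ =>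
      2 * lam * (ξ (j + 1) * ‖u (j + 1)‖ ^ 2) + 2 * lam * (ξ j * ‖u j‖ ^ 2)
        + (2 * lam * (c₂ / (l : ℝ)) + (lam + |μ|) * (c₂ / (l : ℝ)) * (3 / 2)) * ‖u (j + 1)‖ ^ 2
        + ((lam + |μ|) * (c₂ / (l : ℝ)) * (1 / 2)) * ‖u j‖ ^ 2) :=
    (((hg_sum'.mul_left _).add (hg_sum.mul_left _)).add (hnu_sum'.mul_left _)).add
      (hnu_sum.mul_left _)
  have hle : ∀ j : ℤ, (((lam : ℂ) + μ * Complex.I) *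
      ((u (j + 1) - u j) *
        (starRingEnd ℂ) ((ξ (j + 1) : ℂ) * u (j + 1) - (ξ j : ℂ) * u j))).re ≤
      2 * lam * (ξ (j + 1) * ‖u (j + 1)‖ ^ 2) + 2 * lam * (ξ j * ‖u j‖ ^ 2)
        + (2 * lam * (c₂ / (l : ℝ)) + (lam + |μ|) * (c₂ / (l : ℝ)) * (3 / 2)) * ‖u (j + 1)‖ ^ 2
        + ((lam + |μ|) * (c₂ / (l : ℝ)) * (1 / 2)) * ‖u j‖ ^ 2 :=
    fun j => aux_pt lam μ (c₂ / (l : ℝ)) (ξ (j + 1)) (ξ j) hlam hε0 (hxi0 _) (hxi0 _)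
      (hdiff j) (u (j + 1)) (u j)
  -- sum of the dominating sequence
  have hshift_g : ∑' j : ℤ, ξ (j + 1) * ‖u (j + 1)‖ ^ 2 = ∑' j : ℤ, ξ j * ‖u j‖ ^ 2 := by
    have h := (Equiv.addRight (1 : ℤ)).tsum_eq (fun j : ℤ => ξ j * ‖u j‖ ^ 2)
    simpa [Equiv.coe_addRight] using h
  have hshift_nu : ∑' j : ℤ, ‖u (j + 1)‖ ^ 2 = ∑' j : ℤ, ‖u j‖ ^ 2 := by
    have h := (Equiv.addRight (1 : ℤ)).tsum_eq (fun j : ℤ => ‖u j‖ ^ 2)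
    simpa [Equiv.coe_addRight] using h
  have habs : ∑' j : ℤ, ξ j * ‖u j‖ ^ 2 = ∑' j : ℤ, ξ j * ‖u j‖ ^ 2 := by
    simp
  have hcsum_eq : ∑' j : ℤ,
      (2 * lam * (ξ (j + 1) * ‖u (j + 1)‖ ^ 2) + 2 * lam * (ξ j * ‖u j‖ ^ 2)
        + (2 * lam * (c₂ / (l : ℝ)) + (lam + |μ|) * (c₂ / (l : ℝ)) * (3 / 2)) * ‖u (j + 1)‖ ^ 2
        + ((lam + |μ|) * (c₂ / (l : ℝ)) * (1 / 2)) * ‖u j‖ ^ 2)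
      = 4 * lam * (∑' j : ℤ, ξ j * ‖u j‖ ^ 2)
        + (4 * lam + 2 * |μ|) * (c₂ / (l : ℝ)) * (∑' j : ℤ, ‖u j‖ ^ 2) := by
    rw [Summable.tsum_add, Summable.tsum_add, Summable.tsum_add, tsum_mul_left, tsum_mul_left, tsum_mul_left,
      tsum_mul_left, hshift_g, hshift_nu]
    · ring
    · exact hg_sum'.mul_left _
    · exact hg_sum.mul_left _
    · exact (hg_sum'.mul_left _).add (hg_sum.mul_left _)
    · exact hnu_sum'.mul_left _
    · exact ((hg_sum'.mul_left _).add (hg_sum.mul_left _)).add (hnu_sum'.mul_left _)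
    · exact hnu_sum.mul_left _
  rw [hmove, habs, hnorm]
  calc (∑' j : ℤ, (((lam : ℂ) + μ * Complex.I) *
        ((u (j + 1) - u j) *
          (starRingEnd ℂ) ((ξ (j + 1) : ℂ) * u (j + 1) - (ξ j : ℂ) * u j))).re)
      ≤ _ := Summable.tsum_le_tsum hle hre_sum hc_sum
  _ = _ := hcsum_eq
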